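/- Let L = P_σ · D be an n×n complex matrix with σ a permutation of Fin n and D diagonal, and let P be an n×n Hermitian matrix (P = Pᴴ) commuting with L. Then for all j, k ∈ Fin n: P_{j k} · |D_{j j}|² = P_{j k} · |D_{k k}|²; in particular, P_{j k} ≠ 0 implies |D_{j j}| = |D_{k k}|. -/

import Mathlib

open Matrix


/-- The permutation matrix of `σ`: entry `(j,k)` is `1` iff `j = σ k`. -/
def permMat (n : ℕ) (σ : Equiv.Perm (Fin n)) : Matrix (Fin n) (Fin n) ℂ :=
  Matrix.of fun j k => if j = σ k then 1 else 0

theorem stmt15 (n : ℕ) (σ : Equiv.Perm (Fin n)) (d : Fin n → ℂ)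
    (L P : Matrix (Fin n) (Fin n) ℂ)
    (hL : L = permMat n σ * Matrix.diagonal d)
    (hP : P.IsHermitian)
    (hPL : P * L = L * P) :
    ∀ j k : Fin n,
      P j k * ((‖d j‖) ^ 2 : ℂ) = P j k * ((‖d k‖) ^ 2 : ℂ) ∧
      (P j k ≠ 0 → ‖d j‖ = ‖d k‖) := by
  have hLentry : ∀ i j, L i j = if i = σ j then d j else 0 := by
    intro i j
    simp [hL, permMat, Matrix.mul_apply, Matrix.diagonal, ite_and]
  have hLL : Lᴴ * L = Matrix.diagonal (fun j => ((‖d j‖) ^ 2 : ℂ)) := by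
    ext j k
    simp only [Matrix.mul_apply, Matrix.conjTranspose_apply, hLentry, Matrix.diagonal_apply]
    rw [Finset.sum_eq_single (σ j)]
    · by_cases h : j = k
      · subst h
        simp only [if_true]
        rw [show (star (d j)) = (starRingEnd ℂ) (d j) from rfl,
          ← Complex.normSq_eq_conj_mul_self, ← Complex.sq_norm]
        push_cast
        ring
      · simp [h, fun hc : σ j = σ k => h (σ.injective hc)]
    · intro b _ hb
      rw [if_neg hb]
      simp
    · simp
  have hHP : Lᴴ * P = P * Lᴴ := by
    have := congrArg Matrix.conjTranspose hPL
    simpa [Matrix.conjTranspose_mul, hP.eq] using this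
  have hcomm : P * (Lᴴ * L) = (Lᴴ * L) * P := by
    calc P * (Lᴴ * L) = (P * Lᴴ) * L := by rw [Matrix.mul_assoc]
      _ = (Lᴴ * P) * L := by rw [hHP]
      _ = Lᴴ * (P * L) := by rw [Matrix.mul_assoc]
      _ = Lᴴ * (L * P) := by rw [hPL]
      _ = (Lᴴ * L) * P := by rw [Matrix.mul_assoc]
  rw [hLL] at hcomm
  intro j k
  have h := congrFun (congrFun hcomm j) k
  rw [Matrix.mul_diagonal, Matrix.diagonal_mul] at h
  constructor
  · rw [h]; ring
  · intro hne
    have hc : ((‖d k‖) ^ 2 : ℂ) = ((‖d j‖) ^ 2 : ℂ) :=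
      mul_left_cancel₀ hne (h.trans (mul_comm _ _))
    have h2 : (‖d k‖) ^ 2 = (‖d j‖) ^ 2 := by
      exact_mod_cast hc
    have := congrArg Real.sqrt h2
    rw [Real.sqrt_sq (norm_nonneg _), Real.sqrt_sq (norm_nonneg _)] at this
    exact this.symm
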